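/- Let n ≥ 1, let R be a commutative ring, and let A be an n × n matrix over R indexed by ZMod n. Then det A = Σ_{σ : σ(0)=0} Σ_{r ∈ ZMod n} sign(σ) · (−1)^{(n−1)·val(r)} · Π_{i ∈ ZMod n} A(σ(i + r), i), where val(r) ∈ {0, …, n−1} is the natural-number representative of r; that is, the determinant equals the sum over canonical representatives of their rectified offset-diagonal products, with signs given by the orbital sign rule. -/

import Mathlib

lemma addRight_one_eq (m : ℕ) :
    (Equiv.addRight (1 : ZMod (m + 1))) = finRotate (m + 1) := by
  ext i
  exact (finRotate_succ_apply i).symm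

lemma sign_addRight_one (n : ℕ) [NeZero n] :
    Equiv.Perm.sign (Equiv.addRight (1 : ZMod n)) = (-1) ^ (n - 1) := by
  obtain ⟨m, rfl⟩ := Nat.exists_eq_succ_of_ne_zero (NeZero.ne n)
  rw [addRight_one_eq]
  simp only [Nat.succ_sub_one]
  exact sign_finRotate (m + 1)

lemma addRight_pow (n : ℕ) [NeZero n] (k : ℕ) :
    (Equiv.addRight (1 : ZMod n)) ^ k = Equiv.addRight (k : ZMod n) := by
  induction k with
  | zero => ext x; simp
  | succ k ih =>
      rw [pow_succ, ih]
      ext x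
      simp only [Equiv.Perm.mul_apply, Equiv.coe_addRight, Nat.cast_add, Nat.cast_one]; ring

lemma sign_addRight (n : ℕ) [NeZero n] (r : ZMod n) :
    Equiv.Perm.sign (Equiv.addRight r) = (-1) ^ ((n - 1) * r.val) := by
  have : Equiv.addRight r = (Equiv.addRight (1 : ZMod n)) ^ r.val := by
    rw [addRight_pow, ZMod.natCast_val, ZMod.cast_id]
  rw [this, map_pow, sign_addRight_one, ← pow_mul]

/-- Canonical rectification combined with the orbital sign rule: for `n ≥ 1` and an
`n × n` matrix over a commutative ring indexed by `ZMod n`,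
`det A = Σ_{σ(0)=0} Σ_{r} sign σ · (−1)^{(n−1)·val r} · Π_i A (σ (i + r)) i`. -/
theorem stmt_8 (n : ℕ) [NeZero n] (R : Type*) [CommRing R]
    (A : Matrix (ZMod n) (ZMod n) R) :
    A.det = ∑ σ ∈ Finset.univ.filter (fun σ : Equiv.Perm (ZMod n) => σ 0 = 0),
      ∑ r : ZMod n,
        ((Equiv.Perm.sign σ : ℤ) : R) * (-1 : R) ^ ((n - 1) * r.val) *
          ∏ i : ZMod n, A (σ (i + r)) i := by
  rw [Matrix.det_apply', ← Finset.sum_product']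
  refine Finset.sum_nbij' (fun τ => (τ * Equiv.addRight (τ⁻¹ 0), -(τ⁻¹ 0)))
    (fun p => p.1 * Equiv.addRight p.2) ?_ ?_ ?_ ?_ ?_
  · intro τ _
    simp [Finset.mem_product, Equiv.Perm.mul_apply]
  · intro p _
    simp
  · intro τ _
    ext x
    simp [Equiv.Perm.mul_apply]
  · intro p hp
    simp only [Finset.mem_product, Finset.mem_filter, Finset.mem_univ, true_and] at hp
    have h2 : p.1⁻¹ 0 = 0 := by
      rw [Equiv.Perm.inv_eq_iff_eq]; exact hp.1.symm
    have h1 : (p.1 * Equiv.addRight p.2)⁻¹ 0 = -p.2 := by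
      rw [Equiv.Perm.inv_eq_iff_eq]
      simp [Equiv.Perm.mul_apply, hp.1]
    ext x
    · simp [h1, h2, Equiv.Perm.mul_apply]
    · simp [h1, h2]; exact h2
  · intro τ _
    set r := τ⁻¹ 0 with hr
    have h1 : Equiv.Perm.sign (τ * Equiv.addRight r) *
        Equiv.Perm.sign (Equiv.addRight (-r)) = Equiv.Perm.sign τ := by
      rw [← map_mul]
      congr 1
      ext x
      simp [Equiv.Perm.mul_apply]
    have h2 : ∀ i : ZMod n, (τ * Equiv.addRight r) (i + -r) = τ i := by
      intro i; simp [Equiv.Perm.mul_apply]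
    have h3 : ((-1 : R)) ^ ((n - 1) * (-r).val)
        = ((Equiv.Perm.sign (Equiv.addRight (-r)) : ℤ) : R) := by
      rw [sign_addRight]
      push_cast
      ring
    have h1' : ((Equiv.Perm.sign (τ * Equiv.addRight r) : ℤ) : R) *
        ((Equiv.Perm.sign (Equiv.addRight (-r)) : ℤ) : R)
        = ((Equiv.Perm.sign τ : ℤ) : R) := by
      exact_mod_cast congrArg (fun u : ℤˣ => ((u : ℤ) : R)) h1
    simp only [h2, h3]
    rw [mul_assoc]
    rw [← h1']
    ring
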